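/- Let f : [0,1) → ℝ be continuous and piecewise linear with knots 0 = a₀ < a₁ < ⋯ < a_{q+1} = 1 and slopes α₁,…,α_{q+1} satisfying (1/q)·Σ_{i=1}^{q} |α_{i+1} - α_i| ≤ R. For any integer j ≥ 1 with q ≤ 2^j - 1, there exists a continuous piecewise linear function g with at most q knots all belonging to the dyadic grid {k·2^{-j} : 1 ≤ k ≤ 2^j - 1} such that sup_{x ∈ [0,1)} |f(x) - g(x)| ≤ R·q·2^{-j}. -/

import Mathlib

open Real MeasureTheory


lemma step_intble (c d v u w : ℝ) :
    IntervalIntegrable (fun t => if c ≤ t ∧ t < d then v else 0) volume u w := by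
  have h : (fun t => if c ≤ t ∧ t < d then v else 0)
      = (Set.Ico c d).indicator (fun _ => v) := by
    funext t
    by_cases h : c ≤ t ∧ t < d <;> simp [Set.indicator, Set.mem_Ico, h]
  rw [h, intervalIntegrable_iff]
  exact ((integrableOn_const_iff (C := v)).mpr (Or.inr measure_Ioc_lt_top)).indicator measurableSet_Ico

lemma ae_ne_pt (y : ℝ) : ∀ᵐ t : ℝ, t ≠ y := by
  have h : (volume : Measure ℝ) {y} = 0 := measure_singleton y
  have := compl_mem_ae_iff.mpr h
  filter_upwards [this] with t ht
  simpa using ht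

lemma step_int (c d x v : ℝ) (h0c : 0 ≤ c) (hcd : c ≤ d) (h0x : 0 ≤ x) :
    (∫ t in (0:ℝ)..x, (if c ≤ t ∧ t < d then v else 0)) = v * (min d x - min c x) := by
  set m1 := min c x with hm1
  set m2 := min d x with hm2
  have h01 : (0:ℝ) ≤ m1 := le_min h0c h0x
  have h12 : m1 ≤ m2 := min_le_min hcd le_rfl
  have h2x : m2 ≤ x := min_le_right _ _
  have hint := step_intble c d v
  have split : (∫ t in (0:ℝ)..x, (if c ≤ t ∧ t < d then v else 0))
      = (∫ t in (0:ℝ)..m1, (if c ≤ t ∧ t < d then v else 0))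
        + (∫ t in m1..m2, (if c ≤ t ∧ t < d then v else 0))
        + (∫ t in m2..x, (if c ≤ t ∧ t < d then v else 0)) := by
    rw [intervalIntegral.integral_add_adjacent_intervals (hint 0 m1) (hint m1 m2),
      intervalIntegral.integral_add_adjacent_intervals (hint 0 m2) (hint m2 x)]
  have e1 : (∫ t in (0:ℝ)..m1, (if c ≤ t ∧ t < d then v else 0)) = 0 := by
    have hcong : ∀ᵐ t : ℝ, t ∈ Set.uIoc (0:ℝ) m1 → (if c ≤ t ∧ t < d then v else 0) = (0:ℝ) := by
      filter_upwards [ae_ne_pt c] with t htc hmem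
      rw [Set.uIoc_of_le h01] at hmem
      rw [if_neg]
      rintro ⟨h1', _⟩
      exact htc (le_antisymm (hmem.2.trans (min_le_left c x)) h1')
    rw [intervalIntegral.integral_congr_ae hcong]
    simp
  have e2 : (∫ t in m1..m2, (if c ≤ t ∧ t < d then v else 0)) = v * (m2 - m1) := by
    have hcong : ∀ᵐ t : ℝ, t ∈ Set.uIoc m1 m2 → (if c ≤ t ∧ t < d then v else 0) = v := by
      filter_upwards [ae_ne_pt d] with t htd hmem
      rw [Set.uIoc_of_le h12] at hmem
      rw [if_pos]
      constructor
      · rcases le_total c x with h | h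
        · have : m1 = c := min_eq_left h
          linarith [hmem.1]
        · exfalso
          have hx1 : m1 = x := min_eq_right h
          have hx2 : m2 = x := min_eq_right (h.trans hcd)
          have := hmem.1.trans_le hmem.2
          rw [hx1, hx2] at this
          exact lt_irrefl x this
      · exact lt_of_le_of_ne (hmem.2.trans (min_le_left d x)) htd
    rw [intervalIntegral.integral_congr_ae hcong, intervalIntegral.integral_const]
    rw [smul_eq_mul]; ring
  have e3 : (∫ t in m2..x, (if c ≤ t ∧ t < d then v else 0)) = 0 := by
    have hcong : ∀ᵐ t : ℝ, t ∈ Set.uIoc m2 x → (if c ≤ t ∧ t < d then v else 0) = (0:ℝ) := by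
      filter_upwards with t hmem
      rw [Set.uIoc_of_le h2x] at hmem
      rw [if_neg]
      rintro ⟨_, h2'⟩
      rcases le_total d x with h | h
      · have hd : m2 = d := min_eq_left h
        linarith [hmem.1]
      · have hd : m2 = x := min_eq_right h
        linarith [hmem.1, hmem.2]
    rw [intervalIntegral.integral_congr_ae hcong]
    simp
  rw [split, e1, e2, e3]; ring

lemma abs_min_sub_min (p r s : ℝ) : |min p s - min r s| ≤ |p - r| := by
  rcases le_total p s with h1 | h1 <;> rcases le_total r s with h2 | h2
  · rw [min_eq_left h1, min_eq_left h2]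
  · rw [min_eq_left h1, min_eq_right h2]
    rw [abs_of_nonpos (by linarith), abs_of_nonpos (by linarith)]
    linarith
  · rw [min_eq_right h1, min_eq_left h2]
    rw [abs_of_nonneg (by linarith), abs_of_nonneg (by linarith)]
    linarith
  · rw [min_eq_right h1, min_eq_right h2]
    simp


/-- Let `f : [0,1) → ℝ` be continuous and piecewise linear with knots
`0 = a₀ < a₁ < ⋯ < a_{q+1} = 1` and slopes `α₁,…,α_{q+1}` satisfying
`(1/q)·Σ_{i=1}^{q} |α_{i+1} - α_i| ≤ R`.  For any integer `j ≥ 1` with `q ≤ 2ʲ - 1`,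
there exists a continuous piecewise linear function `g` with at most `q` knots all
belonging to the dyadic grid `{k·2⁻ʲ : 1 ≤ k ≤ 2ʲ - 1}` (degenerate knots may sit at `1`)
such that `sup_{x ∈ [0,1)} |f(x) - g(x)| ≤ R·q·2⁻ʲ`. -/
theorem stmt_18
    (q j : ℕ) (hq : 1 ≤ q) (hj : 1 ≤ j) (hqj : q ≤ 2 ^ j - 1)
    (R : ℝ) (hR : 0 ≤ R)
    (a : Fin (q + 2) → ℝ) (ha : StrictMono a) (ha0 : a 0 = 0) (ha1 : a (Fin.last (q + 1)) = 1)
    (α : Fin (q + 1) → ℝ)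
    (hTV : (∑ i : Fin q, |α i.succ - α i.castSucc|) ≤ R * q)
    (f : ℝ → ℝ)
    (hf : ∀ x ∈ Set.Ico (0 : ℝ) 1,
      f x = f 0 + ∫ t in (0 : ℝ)..x,
        ∑ i : Fin (q + 1), if a i.castSucc ≤ t ∧ t < a i.succ then α i else 0) :
    ∃ (b : Fin (q + 2) → ℝ) (β : Fin (q + 1) → ℝ) (g : ℝ → ℝ),
      Monotone b ∧ b 0 = 0 ∧ b (Fin.last (q + 1)) = 1 ∧
        (∀ i : Fin (q + 2), i ≠ 0 → i ≠ Fin.last (q + 1) →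
          (∃ k : ℕ, 1 ≤ k ∧ k ≤ 2 ^ j - 1 ∧ b i = k * (2 : ℝ) ^ (-(j : ℤ))) ∨ b i = 1) ∧
        (∀ x ∈ Set.Ico (0 : ℝ) 1,
          g x = f 0 + ∫ t in (0 : ℝ)..x,
            ∑ i : Fin (q + 1), if b i.castSucc ≤ t ∧ t < b i.succ then β i else 0) ∧
        ∀ x ∈ Set.Ico (0 : ℝ) 1, |f x - g x| ≤ R * q * (2 : ℝ) ^ (-(j : ℤ)) := by
  set D : ℝ := (2:ℝ) ^ (-(j:ℤ)) with hDdef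
  have hDeq : D = ((2:ℝ)^j)⁻¹ := by rw [hDdef, zpow_neg, zpow_natCast]
  have hD0 : (0:ℝ) < D := by rw [hDeq]; positivity
  set b : Fin (q+2) → ℝ := fun i =>
    if i = 0 then 0 else min 1 ((⌈a i * 2^j⌉₊ : ℝ) * D) with hbdef
  have hb0 : b 0 = 0 := if_pos rfl
  have hbval : ∀ i : Fin (q+2), i ≠ 0 → b i = min 1 ((⌈a i * 2^j⌉₊ : ℝ) * D) :=
    fun i h => if_neg h
  have ha_nonneg : ∀ i, 0 ≤ a i := fun i => ha0 ▸ ha.monotone (Fin.zero_le i)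
  have ha_le_one : ∀ i, a i ≤ 1 := fun i => ha1 ▸ ha.monotone (Fin.le_last i)
  have h2jD : ((2:ℝ)^j) * D = 1 := by rw [hDeq]; field_simp
  have hab : ∀ i, a i ≤ b i := by
    intro i
    by_cases h : i = 0
    · subst h; rw [hb0, ha0]
    · rw [hbval i h]
      refine le_min (ha_le_one i) ?_
      have hle := Nat.le_ceil (a i * 2^j)
      calc a i = a i * 2^j * D := by rw [hDeq]; field_simp
        _ ≤ (⌈a i * 2^j⌉₊ : ℝ) * D := by
            exact mul_le_mul_of_nonneg_right hle hD0.le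
  have hba : ∀ i, b i ≤ a i + D := by
    intro i
    by_cases h : i = 0
    · subst h; rw [hb0, ha0]; linarith
    · rw [hbval i h]
      refine (min_le_right _ _).trans ?_
      have hceil : (⌈a i * 2^j⌉₊:ℝ) < a i * 2^j + 1 :=
        Nat.ceil_lt_add_one (mul_nonneg (ha_nonneg i) (by positivity))
      calc (⌈a i * 2^j⌉₊:ℝ) * D ≤ (a i * 2^j + 1) * D :=
            mul_le_mul_of_nonneg_right hceil.le hD0.le
        _ = a i * (2^j * D) + D := by ring
        _ = a i + D := by rw [h2jD]; ring
  have hbmono : Monotone b := by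
    intro i i' hii
    by_cases h : i = 0
    · subst h
      rw [hb0]
      exact (ha_nonneg i').trans (hab i')
    · have h' : i' ≠ 0 := by
        rintro rfl
        exact h (Fin.le_zero_iff.mp hii)
      rw [hbval i h, hbval i' h']
      refine min_le_min le_rfl (mul_le_mul_of_nonneg_right ?_ hD0.le)
      exact_mod_cast Nat.ceil_le_ceil (mul_le_mul_of_nonneg_right (ha.monotone hii) (by positivity))
  have hlast_ne : (Fin.last (q+1) : Fin (q+2)) ≠ 0 := by
    simp [Fin.ext_iff]
  have hblast : b (Fin.last (q+1)) = 1 := by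
    rw [hbval _ hlast_ne, ha1, one_mul]
    have hc : ⌈(2:ℝ)^j⌉₊ = 2^j := by
      have : ((2^j : ℕ) : ℝ) = (2:ℝ)^j := by push_cast; ring
      rw [← this, Nat.ceil_natCast]
    rw [hc]
    have : ((2^j : ℕ) : ℝ) * D = 1 := by push_cast; exact h2jD
    rw [this, min_self]
  have hknots : ∀ i : Fin (q + 2), i ≠ 0 → i ≠ Fin.last (q + 1) →
      (∃ k : ℕ, 1 ≤ k ∧ k ≤ 2 ^ j - 1 ∧ b i = k * (2 : ℝ) ^ (-(j : ℤ))) ∨ b i = 1 := by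
    intro i hi0 hilast
    have hpos : 0 < a i := ha0 ▸ ha (Fin.pos_of_ne_zero hi0)
    have hlt1 : a i < 1 := ha1 ▸ ha (Fin.lt_last_iff_ne_last.mpr hilast)
    set k : ℕ := ⌈a i * 2^j⌉₊ with hkdef
    have hk1 : 1 ≤ k := Nat.one_le_iff_ne_zero.mpr (by
      simp only [hkdef, ne_eq, Nat.ceil_eq_zero, not_le]
      exact mul_pos hpos (by positivity))
    have hk2 : k ≤ 2^j := by
      rw [hkdef]
      apply Nat.ceil_le.mpr
      push_cast
      nlinarith [hlt1, (by positivity : (0:ℝ) < (2:ℝ)^j)]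
    by_cases hk : k = 2^j
    · right
      rw [hbval i hi0, ← hkdef, hk]
      have : ((2^j : ℕ) : ℝ) * D = 1 := by push_cast; exact h2jD
      rw [this, min_self]
    · left
      refine ⟨k, hk1, by omega, ?_⟩
      rw [hbval i hi0, ← hkdef]
      have hkD : (k:ℝ) * D ≤ 1 := by
        calc (k:ℝ) * D ≤ ((2^j : ℕ):ℝ) * D :=
              mul_le_mul_of_nonneg_right (by exact_mod_cast hk2) hD0.le
          _ = 1 := by push_cast; exact h2jD
      rw [min_eq_right hkD]
  set g : ℝ → ℝ := fun x => f 0 + ∫ t in (0 : ℝ)..x,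
      ∑ i : Fin (q + 1), if b i.castSucc ≤ t ∧ t < b i.succ then α i else 0 with hgdef
  refine ⟨b, α, g, hbmono, hb0, hblast, hknots, fun x _ => rfl, ?_⟩
  intro x hx
  obtain ⟨hx0, hx1⟩ := hx
  have key : ∀ (u : Fin (q+2) → ℝ), u 0 = 0 → Monotone u →
      (∫ t in (0:ℝ)..x, ∑ i : Fin (q+1), if u i.castSucc ≤ t ∧ t < u i.succ then α i else 0)
      = ∑ i : Fin (q+1), α i * (min (u i.succ) x - min (u i.castSucc) x) := by
    intro u hu0 humono
    have hs := intervalIntegral.integral_finset_sum (μ := volume) (a := 0) (b := x)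
      (s := Finset.univ)
      (f := fun (i : Fin (q+1)) (t : ℝ) => if u i.castSucc ≤ t ∧ t < u i.succ then α i else 0)
      (fun i _ => step_intble (u i.castSucc) (u i.succ) (α i) 0 x)
    rw [hs]
    exact Finset.sum_congr rfl fun i _ =>
      step_int _ _ _ _ (hu0 ▸ humono (Fin.zero_le _)) (humono (Fin.castSucc_le_succ i)) hx0
  set C : ℕ → ℝ := fun k => if h : k < q+2 then min (a ⟨k,h⟩) x - min (b ⟨k,h⟩) x else 0
    with hCdef
  set Al : ℕ → ℝ := fun k => if h : k < q+1 then α ⟨k,h⟩ else 0 with hAldef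
  have hterm : ∀ i : Fin (q+1),
      α i * (min (a i.succ) x - min (a i.castSucc) x)
        - α i * (min (b i.succ) x - min (b i.castSucc) x)
      = Al i.val * (C (i.val+1) - C i.val) := by
    intro i
    have h1 : i.val < q + 1 := i.isLt
    have h2 : i.val + 1 < q + 2 := by omega
    have h3 : i.val < q + 2 := by omega
    have ea1 : a ⟨i.val+1, h2⟩ = a i.succ := rfl
    have ea2 : a ⟨i.val, h3⟩ = a i.castSucc := rfl
    have eb1 : b ⟨i.val+1, h2⟩ = b i.succ := rfl
    have eb2 : b ⟨i.val, h3⟩ = b i.castSucc := rfl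
    simp only [hCdef, hAldef, dif_pos h1, dif_pos h2, dif_pos h3, ea1, ea2, eb1, eb2]
    ring
  have hsum : f x - g x = ∑ k ∈ Finset.range (q+1), Al k * (C (k+1) - C k) := by
    have hgx : g x = f 0 + ∑ i : Fin (q+1),
        α i * (min (b i.succ) x - min (b i.castSucc) x) := by
      rw [hgdef]; simp only; rw [key b hb0 hbmono]
    have hfx : f x = f 0 + ∑ i : Fin (q+1),
        α i * (min (a i.succ) x - min (a i.castSucc) x) := by
      rw [hf x ⟨hx0, hx1⟩, key a ha0 ha.monotone]
    rw [hfx, hgx]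
    rw [add_sub_add_left_eq_sub, ← Finset.sum_sub_distrib]
    rw [← Fin.sum_univ_eq_sum_range (fun k => Al k * (C (k+1) - C k)) (q+1)]
    exact Finset.sum_congr rfl fun i _ => hterm i
  have hC0 : C 0 = 0 := by
    have h : (0:ℕ) < q + 2 := by omega
    have e0 : (⟨0, h⟩ : Fin (q+2)) = 0 := rfl
    simp only [hCdef, dif_pos h, e0, ha0, hb0]
    ring
  have hClast : C (q+1) = 0 := by
    have h : q + 1 < q + 2 := by omega
    have e0 : (⟨q+1, h⟩ : Fin (q+2)) = Fin.last (q+1) := rfl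
    simp only [hCdef, dif_pos h, e0, ha1, hblast]
    ring
  have hCbound : ∀ k, |C k| ≤ D := by
    intro k
    by_cases h : k < q + 2
    · simp only [hCdef, dif_pos h]
      refine (abs_min_sub_min _ _ _).trans ?_
      rw [abs_of_nonpos (by linarith [hab ⟨k,h⟩])]
      linarith [hba ⟨k,h⟩]
    · simp only [hCdef, dif_neg h, abs_zero]
      exact hD0.le
  have habel : ∑ k ∈ Finset.range (q+1), Al k * (C (k+1) - C k)
      = ∑ k ∈ Finset.range q, (Al k - Al (k+1)) * C (k+1) := by
    have h1 : ∑ k ∈ Finset.range (q+1), Al k * (C (k+1) - C k)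
        = (∑ k ∈ Finset.range (q+1), Al k * C (k+1))
          - ∑ k ∈ Finset.range (q+1), Al k * C k := by
      rw [← Finset.sum_sub_distrib]
      exact Finset.sum_congr rfl fun k _ => mul_sub _ _ _
    rw [h1, Finset.sum_range_succ (fun k => Al k * C (k+1)) q,
      Finset.sum_range_succ' (fun k => Al k * C k) q]
    simp only [hC0, hClast, mul_zero, add_zero]
    rw [← Finset.sum_sub_distrib]
    exact Finset.sum_congr rfl fun k _ => by ring
  calc |f x - g x| = |∑ k ∈ Finset.range q, (Al k - Al (k+1)) * C (k+1)| := by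
        rw [hsum, habel]
    _ ≤ ∑ k ∈ Finset.range q, |(Al k - Al (k+1)) * C (k+1)| :=
        Finset.abs_sum_le_sum_abs _ _
    _ ≤ ∑ k ∈ Finset.range q, |Al (k+1) - Al k| * D := by
        refine Finset.sum_le_sum fun k _ => ?_
        rw [abs_mul, abs_sub_comm]
        exact mul_le_mul_of_nonneg_left (hCbound _) (abs_nonneg _)
    _ = (∑ i : Fin q, |α i.succ - α i.castSucc|) * D := by
        rw [← Finset.sum_mul]
        congr 1
        rw [← Fin.sum_univ_eq_sum_range (fun k => |Al (k+1) - Al k|) q]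
        refine Finset.sum_congr rfl fun i _ => ?_
        have h1 : (i.val : ℕ) < q + 1 := by omega
        have h2 : i.val + 1 < q + 1 := by omega
        have e1 : α ⟨i.val+1, h2⟩ = α i.succ := rfl
        have e2 : α ⟨i.val, h1⟩ = α i.castSucc := rfl
        simp only [hAldef, dif_pos h1, dif_pos h2, e1, e2]
    _ ≤ R * q * D :=
        mul_le_mul_of_nonneg_right hTV hD0.le
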